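/- For any symmetric (0,2)-tensor A on an n-dimensional space (n ≥ 3), the tensor E(A) = g ∧ A² + ((n−2)/2) A ∧ A − tr(A) g ∧ A + (((tr A)² − tr(A²))/(2(n−1))) g ∧ g is a generalized curvature tensor whose Ricci contraction Ric(E(A)) is zero (and hence its scalar curvature κ(E(A)) = 0). -/

import Mathlib

open Module

variable {V : Type*} [AddCommGroup V] [Module ℝ V]

/-- Kulkarni–Nomizu product of two (0,2)-tensors. -/
def KN (A B : V → V → ℝ) : V → V → V → V → ℝ := fun X1 X2 X3 X4 =>
  A X1 X4 * B X2 X3 + A X2 X3 * B X1 X4 - A X1 X3 * B X2 X4 - A X2 X4 * B X1 X3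

/-- The endomorphism `X ∧_A Y` applied to `Z`. -/
def wedgeEnd (A : V → V → ℝ) (X Y Z : V) : V := A Y Z • X - A X Z • Y

/-- Tachibana tensor `Q(A,T)` of a symmetric (0,2)-tensor `A` and a (0,4)-tensor `T`. -/
def Tach (A : V → V → ℝ) (T : V → V → V → V → ℝ) : V → V → V → V → V → V → ℝ :=
  fun X1 X2 X3 X4 X Y =>
    -(T (wedgeEnd A X Y X1) X2 X3 X4) - T X1 (wedgeEnd A X Y X2) X3 X4
      - T X1 X2 (wedgeEnd A X Y X3) X4 - T X1 X2 X3 (wedgeEnd A X Y X4)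

/-- The tensor `E(A) = g ∧ A² + ((n−2)/2) A ∧ A − tr(A) g ∧ A
+ (((tr A)² − tr(A²))/(2(n−1))) g ∧ g` for `A X Y = g (a X) Y`. -/
noncomputable def EAt (g : LinearMap.BilinForm ℝ V) (a : V →ₗ[ℝ] V) : V → V → V → V → ℝ :=
  fun X1 X2 X3 X4 =>
    KN (fun x y => g x y) (fun x y => g (a (a x)) y) X1 X2 X3 X4
      + (((finrank ℝ V : ℝ) - 2) / 2)
          * KN (fun x y => g (a x) y) (fun x y => g (a x) y) X1 X2 X3 X4
      - LinearMap.trace ℝ V a * KN (fun x y => g x y) (fun x y => g (a x) y) X1 X2 X3 X4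
      + (((LinearMap.trace ℝ V a) ^ 2 - LinearMap.trace ℝ V (a ∘ₗ a))
            / (2 * ((finrank ℝ V : ℝ) - 1)))
          * KN (fun x y => g x y) (fun x y => g x y) X1 X2 X3 X4

/-- Pair symmetry of KN for symmetric arguments. -/
lemma KN_pair {P Q : V → V → ℝ} (hP : ∀ x y, P x y = P y x) (hQ : ∀ x y, Q x y = Q y x)
    (X1 X2 X3 X4 : V) : KN P Q X1 X2 X3 X4 = KN P Q X3 X4 X1 X2 := by
  simp only [KN]
  rw [hP X3 X2, hQ X3 X2, hP X4 X1, hQ X4 X1, hP X3 X1, hQ X3 X1, hP X4 X2, hQ X4 X2]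
  ring

/-- First Bianchi identity for KN with symmetric arguments. -/
lemma KN_bianchi {P Q : V → V → ℝ} (hP : ∀ x y, P x y = P y x) (hQ : ∀ x y, Q x y = Q y x)
    (X1 X2 X3 X4 : V) :
    KN P Q X1 X2 X3 X4 + KN P Q X2 X3 X1 X4 + KN P Q X3 X1 X2 X4 = 0 := by
  simp only [KN]
  rw [hP X3 X1, hQ X3 X1, hP X2 X1, hQ X2 X1, hP X3 X2, hQ X3 X2]
  ring

lemma trace_smulRight' [FiniteDimensional ℝ V] (φ : V →ₗ[ℝ] ℝ) (v : V) :
    LinearMap.trace ℝ V (φ.smulRight v) = φ v := by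
  have h : φ.smulRight v = dualTensorHom ℝ V V (φ ⊗ₜ v) := by
    ext x; simp
  rw [h, LinearMap.trace_eq_contract_apply, contractLeft_apply]

/-- The endomorphism realizing the Ricci-type contraction of a KN block. -/
noncomputable def KNmap (g : LinearMap.BilinForm ℝ V) (p q : V →ₗ[ℝ] V) (X Y : V) :
    V →ₗ[ℝ] V :=
  g (q X) Y • p + g (p X) Y • q - ((g.flip Y).comp p).smulRight (q X)
    - ((g.flip Y).comp q).smulRight (p X)

lemma KNmap_apply (g : LinearMap.BilinForm ℝ V) (p q : V →ₗ[ℝ] V) (X Y Z W : V) :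
    g (KNmap g p q X Y Z) W
      = KN (fun x y => g (p x) y) (fun x y => g (q x) y) Z X Y W := by
  simp only [KNmap, KN, LinearMap.sub_apply, LinearMap.add_apply, LinearMap.smul_apply,
    LinearMap.smulRight_apply, LinearMap.comp_apply, map_sub, map_add,
    map_smul, LinearMap.sub_apply, LinearMap.smul_apply, smul_eq_mul]
  simp only [show ∀ x : V, g.flip Y x = g x Y from fun _ => rfl]
  ring

lemma KNmap_trace [FiniteDimensional ℝ V] (g : LinearMap.BilinForm ℝ V)
    (p q : V →ₗ[ℝ] V) (X Y : V) :
    LinearMap.trace ℝ V (KNmap g p q X Y)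
      = g (q X) Y * LinearMap.trace ℝ V p + g (p X) Y * LinearMap.trace ℝ V q
        - g (p (q X)) Y - g (q (p X)) Y := by
  simp only [KNmap, map_sub, map_add, map_smul, trace_smulRight', LinearMap.comp_apply,
    smul_eq_mul]
  simp only [show ∀ x : V, g.flip Y x = g x Y from fun _ => rfl]

theorem statement_12 [FiniteDimensional ℝ V] (hn : 3 ≤ finrank ℝ V)
    (g : LinearMap.BilinForm ℝ V) (hgs : ∀ X Y, g X Y = g Y X)
    (hgn : g.Nondegenerate)
    (a : V →ₗ[ℝ] V) (ha : ∀ X Y, g (a X) Y = g (a Y) X)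
    (L : V → V → (V →ₗ[ℝ] V))
    (hL : ∀ X Y Z W, g (L X Y Z) W = EAt g a Z X Y W)
    (r : V →ₗ[ℝ] V)
    (hr : ∀ X Y, g (r X) Y = LinearMap.trace ℝ V (L X Y)) :
    (∀ X1 X2 X3 X4, EAt g a X1 X2 X3 X4 = - EAt g a X2 X1 X3 X4) ∧
    (∀ X1 X2 X3 X4, EAt g a X1 X2 X3 X4 = EAt g a X3 X4 X1 X2) ∧
    (∀ X1 X2 X3 X4,
      EAt g a X1 X2 X3 X4 + EAt g a X2 X3 X1 X4 + EAt g a X3 X1 X2 X4 = 0) ∧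
    (∀ X Y, LinearMap.trace ℝ V (L X Y) = 0) ∧
    LinearMap.trace ℝ V r = 0 := by
  have hA2 : ∀ X Y : V, g (a (a X)) Y = g (a (a Y)) X := by
    intro X Y
    rw [ha (a X) Y, ha (a Y) X]
    exact hgs (a Y) (a X)
  set n : ℝ := (finrank ℝ V : ℝ) with hn'
  have hn1 : n - 1 ≠ 0 := by
    have : (3 : ℝ) ≤ n := by rw [hn']; exact_mod_cast hn
    linarith
  -- the key trace computation
  have key : ∀ X Y, LinearMap.trace ℝ V (L X Y) = 0 := by
    intro X Y
    set c2 : ℝ := ((finrank ℝ V : ℝ) - 2) / 2 with hc2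
    set c4 : ℝ := ((LinearMap.trace ℝ V a) ^ 2 - LinearMap.trace ℝ V (a ∘ₗ a))
        / (2 * ((finrank ℝ V : ℝ) - 1)) with hc4
    set L' : V →ₗ[ℝ] V :=
      KNmap g LinearMap.id (a ∘ₗ a) X Y + c2 • KNmap g a a X Y
        - LinearMap.trace ℝ V a • KNmap g LinearMap.id a X Y
        + c4 • KNmap g LinearMap.id LinearMap.id X Y with hL'
    have hLL : L X Y = L' := by
      apply LinearMap.ext
      intro Z
      have h0 : ∀ W, g (L X Y Z - L' Z) W = 0 := by
        intro W
        have h1 : g (L' Z) W = EAt g a Z X Y W := by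
          simp only [hL', LinearMap.add_apply, LinearMap.sub_apply, LinearMap.smul_apply,
            map_add, map_sub, map_smul, smul_eq_mul]
          rw [KNmap_apply, KNmap_apply, KNmap_apply, KNmap_apply]
          simp only [EAt, LinearMap.id_coe, id_eq, LinearMap.comp_apply]
          rw [hc2, hc4]
        rw [map_sub, LinearMap.sub_apply, hL, h1, sub_self]
      have := hgn.1 _ h0
      exact sub_eq_zero.mp this
    rw [hLL, hL']
    simp only [map_add, map_sub, map_smul, smul_eq_mul, KNmap_trace]
    simp only [LinearMap.trace_id, LinearMap.id_coe, id_eq, LinearMap.comp_apply]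
    rw [hc2, hc4]
    have hn1' : (finrank ℝ V : ℝ) - 1 ≠ 0 := hn1
    field_simp
    ring
  refine ⟨?_, ?_, ?_, key, ?_⟩
  · intro X1 X2 X3 X4
    simp only [EAt, KN]
    ring
  · intro X1 X2 X3 X4
    simp only [EAt]
    rw [KN_pair hgs hA2 X1 X2 X3 X4, KN_pair ha ha X1 X2 X3 X4,
      KN_pair hgs ha X1 X2 X3 X4, KN_pair hgs hgs X1 X2 X3 X4]
  · intro X1 X2 X3 X4
    simp only [EAt]
    linear_combination (KN_bianchi hgs hA2 X1 X2 X3 X4)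
      + (((finrank ℝ V : ℝ) - 2) / 2) * (KN_bianchi ha ha X1 X2 X3 X4)
      - (LinearMap.trace ℝ V a) * (KN_bianchi hgs ha X1 X2 X3 X4)
      + (((LinearMap.trace ℝ V a) ^ 2 - LinearMap.trace ℝ V (a ∘ₗ a))
            / (2 * ((finrank ℝ V : ℝ) - 1))) * (KN_bianchi hgs hgs X1 X2 X3 X4)
  · have hr0 : r = 0 := by
      apply LinearMap.ext
      intro X
      apply hgn.1
      intro W
      rw [hr, key]
    rw [hr0, map_zero]
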